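/- Let d : K → ℝ be a ring homomorphism from the fusion ring K = ⊕_{j∈I} ℤj (with structure constants m_{ij}^k ≥ 0, involution j ↦ j̄, unit e) such that d(j) ≥ 1 and d(j̄) = d(j) for all j. If I is finite, then the vector (d(j))_{j∈I} ∈ ℓ²(I) is an eigenvector with eigenvalue 1 of λ_μ = ∑_j (μ(j)/d(j)) Λ_j for every probability measure μ on I, where Λ_j is the matrix (m_{jk}^i)_{i,k}. Consequently ‖λ_μ‖ = 1 and (K, d) is amenable. -/

import Mathlib

open Finset

/-- For a finite fusion ring with dimension function `d`, the vector `(d(j))_j` is an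
eigenvector with eigenvalue `1` of `λ_μ = ∑_j (μ(j)/d(j)) Λ_j` for every probability
measure `μ`, and consequently `‖λ_μ‖ = 1` (so `(K, d)` is amenable). -/
theorem stmt_18 {I : Type*} [Fintype I] [DecidableEq I]
    (m : I → I → I → ℕ) (e : I) (bar : I → I) (d : I → ℝ)
    (hd1 : ∀ j, 1 ≤ d j) (hdbar : ∀ j, d (bar j) = d j)
    (hdmul : ∀ i j, d i * d j = ∑ k, (m i j k : ℝ) * d k)
    (hfrob : ∀ j k i, m j k i = m (bar j) i k)
    (hunit : ∀ i j, m e i j = if i = j then 1 else 0)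
    (μ : I → ℝ) (hμ : ∀ j, 0 ≤ μ j) (hμ1 : ∑ j, μ j = 1) :
    (Matrix.of fun i k => ∑ j, μ j / d j * (m j k i : ℝ)).mulVec d = d ∧
    ‖Matrix.toEuclideanCLM (𝕜 := ℝ)
        (Matrix.of fun i k => ∑ j, μ j / d j * (m j k i : ℝ))‖ = 1 := by
  classical
  set A : Matrix I I ℝ := Matrix.of fun i k => ∑ j, μ j / d j * (m j k i : ℝ) with hA
  have hdpos : ∀ j, 0 < d j := fun j => lt_of_lt_of_le one_pos (hd1 j)
  have hApos : ∀ i k, 0 ≤ A i k := fun i k =>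
    Finset.sum_nonneg fun j _ => mul_nonneg (div_nonneg (hμ j) (hdpos j).le) (Nat.cast_nonneg _)
  have hrow : ∀ i, ∑ k, A i k * d k = d i := by
    intro i
    calc ∑ k, A i k * d k = ∑ j, μ j / d j * ∑ k, (m j k i : ℝ) * d k := by
          simp only [hA, Matrix.of_apply, Finset.sum_mul, Finset.mul_sum]
          rw [Finset.sum_comm]
          exact Finset.sum_congr rfl fun j _ => Finset.sum_congr rfl fun k _ => by ring
      _ = ∑ j, μ j / d j * (d (bar j) * d i) := by
          refine Finset.sum_congr rfl fun j _ => ?_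
          congr 1
          rw [hdmul (bar j) i]
          exact Finset.sum_congr rfl fun k _ => by rw [hfrob j k i]
      _ = ∑ j, μ j * d i := by
          refine Finset.sum_congr rfl fun j _ => ?_
          rw [hdbar]
          have hj := (hdpos j).ne'
          field_simp
      _ = d i := by rw [← Finset.sum_mul, hμ1, one_mul]
  have hcol : ∀ k, ∑ i, A i k * d i = d k := by
    intro k
    calc ∑ i, A i k * d i = ∑ j, μ j / d j * ∑ i, (m j k i : ℝ) * d i := by
          simp only [hA, Matrix.of_apply, Finset.sum_mul, Finset.mul_sum]
          rw [Finset.sum_comm]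
          exact Finset.sum_congr rfl fun j _ => Finset.sum_congr rfl fun i _ => by ring
      _ = ∑ j, μ j / d j * (d j * d k) := by
          refine Finset.sum_congr rfl fun j _ => ?_
          rw [hdmul j k]
      _ = ∑ j, μ j * d k := by
          refine Finset.sum_congr rfl fun j _ => ?_
          have hj := (hdpos j).ne'
          field_simp
      _ = d k := by rw [← Finset.sum_mul, hμ1, one_mul]
  have hmv : A.mulVec d = d := by
    funext i
    simpa [Matrix.mulVec, dotProduct] using hrow i
  refine ⟨hmv, ?_⟩
  set T := Matrix.toEuclideanCLM (𝕜 := ℝ) A with hT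
  have hTx : ∀ (x : EuclideanSpace ℝ I) (i : I),
      (T x) i = ∑ k, A i k * x k := fun x i => rfl
  refine le_antisymm ?_ ?_
  · refine ContinuousLinearMap.opNorm_le_bound _ zero_le_one fun x => ?_
    rw [one_mul]
    rw [EuclideanSpace.norm_eq, EuclideanSpace.norm_eq]
    refine Real.sqrt_le_sqrt ?_
    simp only [Real.norm_eq_abs, sq_abs]
    have key : ∀ i, (∑ k, A i k * x k) ^ 2 ≤ d i * ∑ k, A i k * x k ^ 2 / d k := by
      intro i
      have cs := Finset.sum_mul_sq_le_sq_mul_sq Finset.univ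
        (fun k => Real.sqrt (A i k * d k)) (fun k => Real.sqrt (A i k / d k) * x k)
      calc (∑ k, A i k * x k) ^ 2
          = (∑ k, Real.sqrt (A i k * d k) * (Real.sqrt (A i k / d k) * x k)) ^ 2 := by
            congr 1
            refine Finset.sum_congr rfl fun k _ => ?_
            rw [← mul_assoc, ← Real.sqrt_mul (mul_nonneg (hApos i k) (hdpos k).le)]
            have hk := (hdpos k).ne'
            have h1 : A i k * d k * (A i k / d k) = (A i k) ^ 2 := by
              field_simp
            rw [h1, Real.sqrt_sq (hApos i k)]
        _ ≤ (∑ k, Real.sqrt (A i k * d k) ^ 2) * ∑ k, (Real.sqrt (A i k / d k) * x k) ^ 2 := cs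
        _ = d i * ∑ k, A i k * x k ^ 2 / d k := by
            congr 1
            · rw [← hrow i]
              exact Finset.sum_congr rfl fun k _ =>
                Real.sq_sqrt (mul_nonneg (hApos i k) (hdpos k).le)
            · refine Finset.sum_congr rfl fun k _ => ?_
              rw [mul_pow, Real.sq_sqrt (div_nonneg (hApos i k) (hdpos k).le)]
              ring
    calc ∑ i, (T x) i ^ 2 = ∑ i, (∑ k, A i k * x k) ^ 2 := by
          exact Finset.sum_congr rfl fun i _ => by rw [hTx]
      _ ≤ ∑ i, d i * ∑ k, A i k * x k ^ 2 / d k := Finset.sum_le_sum fun i _ => key i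
      _ = ∑ k, (x k ^ 2 / d k) * ∑ i, A i k * d i := by
          simp only [Finset.mul_sum, Finset.sum_mul]
          rw [Finset.sum_comm]
          exact Finset.sum_congr rfl fun k _ => Finset.sum_congr rfl fun i _ => by ring
      _ = ∑ k, x k ^ 2 := by
          refine Finset.sum_congr rfl fun k _ => ?_
          rw [hcol k]
          exact div_mul_cancel₀ _ (hdpos k).ne'
  · set D : EuclideanSpace ℝ I := (WithLp.equiv 2 (I → ℝ)).symm d with hD
    have hTD : T D = D := by
      have hlin : Matrix.toLin' A d = d := by rw [Matrix.toLin'_apply, hmv]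
      rw [hT, hD, WithLp.equiv_symm_apply, Matrix.toEuclideanCLM_toLp, hmv]
    have hDpos : 0 < ‖D‖ := by
      rw [norm_pos_iff]
      intro h
      have : d e = 0 := congrFun (congrArg (WithLp.equiv 2 (I → ℝ)) h) e
      linarith [hd1 e]
    have h := T.le_opNorm D
    rw [hTD] at h
    nlinarith
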